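/- Let K be a field, R = K[x_1,…,x_n], I ⊆ R a square-free monomial ideal, 𝔭 ⊆ R a prime monomial ideal, and let {u_1,…,u_{β_1(I)}} be a maximal independent set of minimal monomial generators of I (so its cardinality is β_1(I)). Suppose that for some positive integer s, 𝔭\x_i ∉ Ass(R/(I\x_i)^s) for every variable x_i dividing the product ∏_{i=1}^{β_1(I)} u_i. If 𝔭 ∈ Ass(R/I^s), then s ≥ β_1(I) + 1. -/

import Mathlib

open MvPolynomial

/-- Deletion of the variable `x i` from a monomial ideal: set `x i = 0` in every generator. -/
noncomputable def deleteVar {K : Type*} [Field K] {n : ℕ} (i : Fin n)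
    (I : Ideal (MvPolynomial (Fin n) K)) : Ideal (MvPolynomial (Fin n) K) :=
  I.map (aeval fun j => if j = i then (0 : MvPolynomial (Fin n) K) else X j).toRingHom

/-- The square-free monomial `∏_{i ∈ T} x_i` is a minimal monomial generator of the
square-free monomial ideal `I`: it lies in `I` and no proper divisor does. -/
def IsMinGen {K : Type*} [Field K] {n : ℕ} (I : Ideal (MvPolynomial (Fin n) K))
    (T : Finset (Fin n)) : Prop :=
  (∏ i ∈ T, (X i : MvPolynomial (Fin n) K)) ∈ I ∧
    ∀ T' ⊂ T, (∏ i ∈ T', (X i : MvPolynomial (Fin n) K)) ∉ I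

section Aux
variable {K : Type*} [Field K] {n : ℕ}

/-- exponent vector of the squarefree monomial on `T` -/
noncomputable def expOf (T : Finset (Fin n)) : Fin n →₀ ℕ := ∑ i ∈ T, Finsupp.single i 1

lemma expOf_apply (T : Finset (Fin n)) (i : Fin n) :
    expOf T i = if i ∈ T then 1 else 0 := by
  classical
  rw [expOf, Finsupp.finset_sum_apply]
  simp [Finsupp.single_apply, Finset.sum_ite_eq' T i (fun _ => (1:ℕ))]

lemma prod_X_eq (T : Finset (Fin n)) :
    (∏ i ∈ T, (X i : MvPolynomial (Fin n) K)) = monomial (expOf T) 1 := by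
  classical
  induction T using Finset.induction with
  | empty => simp [expOf]
  | @insert a T h ih =>
    rw [Finset.prod_insert h, ih]
    rw [show expOf (insert a T) = Finsupp.single a 1 + expOf T from by
      rw [expOf, Finset.sum_insert h]; rfl]
    rw [X]
    simp [monomial_mul]

lemma prod_monomial_eq {ι : Type*} (F : Finset ι) (e : ι → (Fin n →₀ ℕ)) :
    (∏ j ∈ F, (monomial (e j) 1 : MvPolynomial (Fin n) K)) = monomial (∑ j ∈ F, e j) 1 := by
  classical
  induction F using Finset.induction with
  | empty => simp
  | insert _ _ h ih => rw [Finset.prod_insert h, ih, Finset.sum_insert h, monomial_mul, one_mul]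

/-- s-fold sumset -/
def sumSet (D : Set (Fin n →₀ ℕ)) : ℕ → Set (Fin n →₀ ℕ)
  | 0 => {0}
  | k+1 => {d | ∃ a ∈ D, ∃ e ∈ sumSet D k, d = a + e}

lemma span_pow (D : Set (Fin n →₀ ℕ)) (s : ℕ) :
    (Ideal.span ((fun d => (monomial d 1 : MvPolynomial (Fin n) K)) '' D)) ^ s =
      Ideal.span ((fun d => (monomial d 1 : MvPolynomial (Fin n) K)) '' sumSet D s) := by
  induction s with
  | zero =>
    simp only [pow_zero, sumSet]
    rw [Ideal.one_eq_top, eq_comm, Ideal.eq_top_iff_one]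
    have : (1 : MvPolynomial (Fin n) K) ∈
        ((fun d => (monomial d 1 : MvPolynomial (Fin n) K)) '' {0}) := by simp
    exact Ideal.subset_span this
  | succ k ih =>
    rw [pow_succ', ih, Ideal.span_mul_span']
    congr 1
    ext x
    constructor
    · rintro ⟨-, ⟨a, ha, rfl⟩, -, ⟨e, he, rfl⟩, rfl⟩
      exact ⟨a + e, ⟨a, ha, e, he, rfl⟩, by simp [monomial_mul]⟩
    · rintro ⟨d, ⟨a, ha, e, he, rfl⟩, rfl⟩
      exact ⟨monomial a 1, ⟨a, ha, rfl⟩, monomial e 1, ⟨e, he, rfl⟩, by simp [monomial_mul]⟩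

lemma mono_mem_iff {D : Set (Fin n →₀ ℕ)} {u : Fin n →₀ ℕ} :
    (monomial u 1 : MvPolynomial (Fin n) K) ∈
      Ideal.span ((fun d => (monomial d 1 : MvPolynomial (Fin n) K)) '' D) ↔ ∃ d ∈ D, d ≤ u := by
  rw [mem_ideal_span_monomial_image]
  simp [support_monomial]

lemma mono_mul_mem_iff {D : Set (Fin n →₀ ℕ)} {u : Fin n →₀ ℕ} {f : MvPolynomial (Fin n) K} :
    (monomial u 1 : MvPolynomial (Fin n) K) * f ∈
      Ideal.span ((fun d => (monomial d 1 : MvPolynomial (Fin n) K)) '' D) ↔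
      ∀ w ∈ f.support, ∃ d ∈ D, d ≤ u + w := by
  rw [mem_ideal_span_monomial_image]
  constructor
  · intro h w hw
    refine h (u + w) ?_
    rw [mem_support_iff, coeff_monomial_mul, one_mul]
    exact mem_support_iff.mp hw
  · intro h v hv
    rw [mem_support_iff, coeff_monomial_mul'] at hv
    split_ifs at hv with huv
    · rw [one_mul] at hv
      obtain ⟨d, hd, hle⟩ := h (v - u) (mem_support_iff.mpr hv)
      exact ⟨d, hd, hle.trans (by rw [add_tsub_cancel_of_le huv])⟩
    · exact absurd rfl hv

lemma sub_aeval_mem_span (B : Set (Fin n)) [DecidablePred (· ∈ B)]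
    (f : MvPolynomial (Fin n) K) :
    f - (aeval fun j => if j ∈ B then (0 : MvPolynomial (Fin n) K) else X j) f ∈
      Ideal.span (X '' B) := by
  induction f using MvPolynomial.induction_on with
  | C a => rw [aeval_C, algebraMap_eq, sub_self]; exact Ideal.zero_mem _
  | add f g hf hg =>
    rw [map_add, add_sub_add_comm]
    exact Ideal.add_mem _ hf hg
  | mul_X f j hf =>
    rw [map_mul, aeval_X]
    have : f * X j - (aeval fun j => if j ∈ B then (0 : MvPolynomial (Fin n) K) else X j) f *
        (if j ∈ B then (0 : MvPolynomial (Fin n) K) else X j) =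
        (f - (aeval fun j => if j ∈ B then (0 : MvPolynomial (Fin n) K) else X j) f) * X j +
        (aeval fun j => if j ∈ B then (0 : MvPolynomial (Fin n) K) else X j) f *
          (X j - if j ∈ B then (0 : MvPolynomial (Fin n) K) else X j) := by ring
    rw [this]
    refine Ideal.add_mem _ (Ideal.mul_mem_right _ _ hf) ?_
    split_ifs with hj
    · rw [sub_zero]
      exact Ideal.mul_mem_left _ _ (Ideal.subset_span ⟨j, hj, rfl⟩)
    · rw [sub_self, mul_zero]; exact Ideal.zero_mem _

lemma span_X_eq_ker (B : Set (Fin n)) [DecidablePred (· ∈ B)] :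
    (Ideal.span (X '' B) : Ideal (MvPolynomial (Fin n) K)) =
      RingHom.ker ((aeval fun j => if j ∈ B then (0 : MvPolynomial (Fin n) K) else X j) :
        MvPolynomial (Fin n) K →ₐ[K] MvPolynomial (Fin n) K) := by
  apply le_antisymm
  · rw [Ideal.span_le]
    rintro - ⟨j, hj, rfl⟩
    simp [RingHom.mem_ker, aeval_X, if_pos hj]
  · intro f hf
    have h0 : (aeval fun j => if j ∈ B then (0 : MvPolynomial (Fin n) K) else X j) f = 0 := hf
    have := sub_aeval_mem_span B f
    rwa [h0, sub_zero] at this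

lemma isPrime_span_X (B : Set (Fin n)) :
    (Ideal.span (X '' B) : Ideal (MvPolynomial (Fin n) K)).IsPrime := by
  classical
  rw [span_X_eq_ker B]
  exact RingHom.ker_isPrime _

lemma deleteVar_span (i : Fin n) (G : Set (MvPolynomial (Fin n) K)) :
    deleteVar i (Ideal.span G) =
      Ideal.span ((aeval fun j => if j = i then (0 : MvPolynomial (Fin n) K) else X j) '' G) := by
  rw [deleteVar, Ideal.map_span]
  rfl

lemma deleteVar_span_X (i : Fin n) (A : Set (Fin n)) :
    deleteVar i (Ideal.span (X '' A) : Ideal (MvPolynomial (Fin n) K)) =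
      Ideal.span (X '' (A \ {i})) := by
  rw [deleteVar_span]
  apply le_antisymm
  · rw [Ideal.span_le]
    rintro - ⟨-, ⟨j, hj, rfl⟩, rfl⟩
    rw [aeval_X]
    split_ifs with h
    · exact Ideal.zero_mem _
    · exact Ideal.subset_span ⟨j, ⟨hj, h⟩, rfl⟩
  · rw [Ideal.span_le]
    rintro - ⟨j, ⟨hj, hji⟩, rfl⟩
    refine Ideal.subset_span ⟨X j, ⟨j, hj, rfl⟩, ?_⟩
    rw [aeval_X, if_neg (by simpa using hji)]

lemma mem_ann_quot_iff (J : Ideal (MvPolynomial (Fin n) K)) (g r : MvPolynomial (Fin n) K) :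
    r ∈ (Submodule.span (MvPolynomial (Fin n) K)
        {(Ideal.Quotient.mk J g : MvPolynomial (Fin n) K ⧸ J)}).annihilator ↔ r * g ∈ J := by
  rw [Submodule.mem_annihilator_span_singleton, ← Ideal.Quotient.mk_eq_mk,
    ← Submodule.Quotient.mk_smul, smul_eq_mul, Submodule.Quotient.mk_eq_zero]

lemma deleteVar_prodX_span (i : Fin n) (S : Set (Finset (Fin n))) :
    deleteVar i (Ideal.span ((fun T => ∏ k ∈ T, (X k : MvPolynomial (Fin n) K)) '' S)) =
      Ideal.span ((fun d => (monomial d 1 : MvPolynomial (Fin n) K)) ''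
        (expOf '' {T ∈ S | i ∉ T})) := by
  classical
  rw [deleteVar_span]
  apply le_antisymm
  · rw [Ideal.span_le]
    rintro - ⟨-, ⟨T, hT, rfl⟩, rfl⟩
    have heval : (aeval fun j => if j = i then (0 : MvPolynomial (Fin n) K) else X j)
        (∏ k ∈ T, (X k : MvPolynomial (Fin n) K)) =
        ∏ k ∈ T, (if k = i then (0 : MvPolynomial (Fin n) K) else X k) := by
      rw [map_prod]; exact Finset.prod_congr rfl fun k _ => aeval_X _ _
    rw [heval]
    by_cases hiT : i ∈ T
    · have hz : (∏ k ∈ T, if k = i then (0 : MvPolynomial (Fin n) K) else X k) = 0 :=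
        Finset.prod_eq_zero hiT (if_pos rfl)
      rw [hz]
      exact Ideal.zero_mem _
    · have : ∏ k ∈ T, (if k = i then (0 : MvPolynomial (Fin n) K) else X k) =
          ∏ k ∈ T, (X k : MvPolynomial (Fin n) K) :=
        Finset.prod_congr rfl fun k hk => if_neg (fun h => hiT (by rw [← h]; exact hk))
      rw [this, prod_X_eq]
      exact Ideal.subset_span ⟨expOf T, ⟨T, ⟨hT, hiT⟩, rfl⟩, rfl⟩
  · rw [Ideal.span_le]
    rintro - ⟨-, ⟨T, ⟨hT, hiT⟩, rfl⟩, rfl⟩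
    refine Ideal.subset_span ⟨∏ k ∈ T, (X k : MvPolynomial (Fin n) K), ⟨T, hT, rfl⟩, ?_⟩
    show _ = monomial (expOf T) (1:K)
    rw [map_prod, ← prod_X_eq]
    exact Finset.prod_congr rfl fun k hk => by
      rw [aeval_X, if_neg (fun h => hiT (by rw [← h]; exact hk))]

lemma sumSet_apply_zero {D : Set (Fin n →₀ ℕ)} (i : Fin n) (hD : ∀ a ∈ D, a i = 0) :
    ∀ s, ∀ d ∈ sumSet D s, d i = 0 := by
  intro s
  induction s with
  | zero => rintro d hd; rw [Set.mem_singleton_iff.mp hd]; rfl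
  | succ k ih =>
    rintro - ⟨a, ha, e, he, rfl⟩
    rw [Finsupp.add_apply, hD a ha, ih e he]

lemma sumSet_subset {D D' : Set (Fin n →₀ ℕ)} (h : D' ⊆ D) :
    ∀ s, sumSet D' s ⊆ sumSet D s := by
  intro s
  induction s with
  | zero => exact le_rfl
  | succ k ih =>
    rintro - ⟨a, ha, e, he, rfl⟩
    exact ⟨a, h ha, e, ih he, rfl⟩

lemma sumSet_filter {D : Set (Fin n →₀ ℕ)} (i : Fin n) :
    ∀ s, ∀ d ∈ sumSet D s, d i = 0 → d ∈ sumSet {a ∈ D | a i = 0} s := by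
  intro s
  induction s with
  | zero => exact fun d hd _ => hd
  | succ k ih =>
    rintro - ⟨a, ha, e, he, rfl⟩ h0
    rw [Finsupp.add_apply, Nat.add_eq_zero] at h0
    exact ⟨a, ⟨ha, h0.1⟩, e, ih e he h0.2, rfl⟩

end Aux

theorem stmt_2 {K : Type*} [Field K] {n : ℕ}
    (I : Ideal (MvPolynomial (Fin n) K))
    (hI : ∃ S : Set (Finset (Fin n)),
      I = Ideal.span ((fun T => ∏ i ∈ T, (X i : MvPolynomial (Fin n) K)) '' S))
    (A : Set (Fin n)) (p : Ideal (MvPolynomial (Fin n) K))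
    (hpA : p = Ideal.span (X '' A)) (hp : p.IsPrime)
    -- `{u_1, …, u_b}` is an independent set of minimal generators (`b = β₁(I)`):
    (b : ℕ) (U : Fin b → Finset (Fin n))
    (hUinj : Function.Injective U)
    (hUgen : ∀ j : Fin b, IsMinGen I (U j))
    (hUindep : ∀ j k : Fin b, j ≠ k → Disjoint (U j) (U k))
    -- … which is maximal: every independent set of minimal generators has at most `b` elements:
    (hUmax : ∀ Γ : Finset (Finset (Fin n)), (∀ T ∈ Γ, IsMinGen I T) →
      (∀ T ∈ Γ, ∀ T' ∈ Γ, T ≠ T' → Disjoint T T') → Γ.card ≤ b)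
    (s : ℕ) (hs : 1 ≤ s)
    (hdel : ∀ j : Fin b, ∀ i ∈ U j,
      deleteVar i p ∉
        associatedPrimes (MvPolynomial (Fin n) K)
          ((MvPolynomial (Fin n) K) ⧸ (deleteVar i I) ^ s))
    (hass : p ∈ associatedPrimes (MvPolynomial (Fin n) K) ((MvPolynomial (Fin n) K) ⧸ I ^ s)) :
    b + 1 ≤ s := by
  classical
  by_contra hcon
  have hsb : s ≤ b := by omega
  obtain ⟨S, hIS⟩ := hI
  have hImono : I = Ideal.span ((fun d => (monomial d 1 : MvPolynomial (Fin n) K)) ''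
      (expOf '' S)) := by
    rw [hIS, Set.image_image]
    exact congrArg _ (Set.image_congr' fun T => prod_X_eq T)
  have hIpow : I ^ s = Ideal.span ((fun d => (monomial d 1 : MvPolynomial (Fin n) K)) ''
      sumSet (expOf '' S) s) := by rw [hImono, span_pow]
  -- the witness of the associated prime
  obtain ⟨hp', x, hx⟩ := Submodule.isAssociatedPrime_iff.mp hass
  obtain ⟨f, rfl⟩ := Ideal.Quotient.mk_surjective x
  have hpf : ∀ r, r ∈ p ↔ r * f ∈ I ^ s := fun r => by
    rw [hx, Submodule.mem_colon_singleton, Submodule.mem_bot, ← Ideal.Quotient.mk_eq_mk,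
      ← Submodule.Quotient.mk_smul, smul_eq_mul, Submodule.Quotient.mk_eq_zero]
  have hfnot : f ∉ I ^ s := fun h =>
    hp.ne_top ((Ideal.eq_top_iff_one _).mpr ((hpf 1).mpr (by rwa [one_mul])))
  have hf0 : f ≠ 0 := fun h => hfnot (h ▸ Ideal.zero_mem _)
  -- the colon ideals by single monomials of `f`
  set Q : (Fin n →₀ ℕ) → Ideal (MvPolynomial (Fin n) K) :=
    fun u => (I ^ s).colon ((Ideal.span {monomial u (1:K)} : Ideal (MvPolynomial (Fin n) K)) :
      Set (MvPolynomial (Fin n) K)) with hQ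
  have hQmem : ∀ (u : Fin n →₀ ℕ) (r : MvPolynomial (Fin n) K),
      r ∈ Q u ↔ r * monomial u 1 ∈ I ^ s := fun u r => Ideal.mem_colon_span_singleton
  have hXmono : ∀ (k : Fin n) (u : Fin n →₀ ℕ),
      (X k : MvPolynomial (Fin n) K) * monomial u 1 =
        monomial (Finsupp.single k 1 + u) 1 := by
    intro k u; rw [X]; simp [monomial_mul]
  have hQp : ∀ u ∈ f.support, p ≤ Q u := by
    intro u hu
    rw [hpA, Ideal.span_le]
    rintro - ⟨k, hk, rfl⟩
    have hXk : (X k : MvPolynomial (Fin n) K) * f ∈ I ^ s :=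
      (hpf _).mp (hpA ▸ Ideal.subset_span ⟨k, hk, rfl⟩)
    rw [hIpow, show (X k : MvPolynomial (Fin n) K) = monomial (Finsupp.single k 1) 1 from rfl]
      at hXk
    obtain ⟨d, hd, hdle⟩ := mono_mul_mem_iff.mp hXk u hu
    rw [SetLike.mem_coe, hQmem, hXmono, hIpow]
    exact mono_mem_iff.mpr ⟨d, hd, hdle⟩
  have hexists : ∃ u ∈ f.support, Q u ≤ p := by
    apply hp.inf_le'.mp
    intro r hr
    have hrQ : ∀ u ∈ f.support, r * monomial u 1 ∈ I ^ s := fun u hu =>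
      (hQmem u r).mp (Submodule.mem_finsetInf.mp hr u hu)
    rw [hpf]
    have : r * f = ∑ u ∈ f.support, C (coeff u f) * (r * monomial u 1) := by
      conv_lhs => rw [f.as_sum]
      rw [Finset.mul_sum]
      refine Finset.sum_congr rfl fun u hu => ?_
      have hC : C (coeff u f) * (monomial u (1:K)) = monomial u (coeff u f) := by
        rw [C_mul_monomial, mul_one]
      rw [← hC]; ring
    rw [this]
    exact Ideal.sum_mem _ fun u hu => Ideal.mul_mem_left _ _ (hrQ u hu)
  obtain ⟨u, hu, hQup⟩ := hexists
  have hpu : ∀ r, r ∈ p ↔ r * monomial u 1 ∈ I ^ s := fun r =>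
    ⟨fun h => (hQmem u r).mp (hQp u hu h), fun h => hQup ((hQmem u r).mpr h)⟩
  have hMu : (monomial u 1 : MvPolynomial (Fin n) K) ∉ I ^ s := fun h =>
    hp.ne_top ((Ideal.eq_top_iff_one _).mpr ((hpu 1).mpr (by rwa [one_mul])))
  -- every variable occurring in some `U j` divides the monomial `X^u`
  have hui : ∀ j : Fin b, ∀ i ∈ U j, u i ≠ 0 := by
    intro j i hij hui0
    apply hdel j i hij
    set D' : Set (Fin n →₀ ℕ) := {a ∈ expOf '' S | a i = 0} with hD'
    have hsetseq : expOf '' {T ∈ S | i ∉ T} = D' := by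
      ext a
      constructor
      · rintro ⟨T, ⟨hT, hiT⟩, rfl⟩
        exact ⟨⟨T, hT, rfl⟩, by rw [expOf_apply, if_neg hiT]⟩
      · rintro ⟨⟨T, hT, rfl⟩, ha⟩
        refine ⟨T, ⟨hT, ?_⟩, rfl⟩
        rw [expOf_apply] at ha
        by_contra hiT
        rw [if_pos hiT] at ha
        exact one_ne_zero ha
    have hdelI : deleteVar i I = Ideal.span
        ((fun d => (monomial d 1 : MvPolynomial (Fin n) K)) '' D') := by
      rw [hIS, deleteVar_prodX_span, hsetseq]
    have hdelIpow : (deleteVar i I) ^ s = Ideal.span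
        ((fun d => (monomial d 1 : MvPolynomial (Fin n) K)) '' sumSet D' s) := by
      rw [hdelI, span_pow]
    have hD'sub : D' ⊆ expOf '' S := fun a ha => ha.1
    have hD'i : ∀ t, ∀ d ∈ sumSet D' t, d i = 0 := sumSet_apply_zero i fun a ha => ha.2
    refine Submodule.isAssociatedPrime_iff.mpr ⟨?_, Ideal.Quotient.mk _ (monomial u 1), ?_⟩
    · rw [hpA, deleteVar_span_X]
      exact isPrime_span_X _
    · ext r
      rw [Submodule.mem_colon_singleton, Submodule.mem_bot, ← Ideal.Quotient.mk_eq_mk,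
        ← Submodule.Quotient.mk_smul, smul_eq_mul, Submodule.Quotient.mk_eq_zero]
      constructor
      · intro hr
        rw [hpA, deleteVar_span_X] at hr
        rw [hdelIpow]
        have hcolon : Ideal.span (X '' (A \ {i})) ≤
            (Ideal.span ((fun d => (monomial d 1 : MvPolynomial (Fin n) K)) ''
              sumSet D' s)).colon ((Ideal.span {monomial u (1:K)} : Ideal (MvPolynomial (Fin n) K)) :
                Set (MvPolynomial (Fin n) K)) := by
          rw [Ideal.span_le]
          rintro - ⟨k, ⟨hkA, hki⟩, rfl⟩
          rw [SetLike.mem_coe, Ideal.mem_colon_span_singleton]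
          have hk1 : (X k : MvPolynomial (Fin n) K) * monomial u 1 ∈ I ^ s :=
            (hpu _).mp (hpA ▸ Ideal.subset_span ⟨k, hkA, rfl⟩)
          rw [hIpow, hXmono] at hk1
          obtain ⟨d, hd, hdle⟩ := mono_mem_iff.mp hk1
          have hdi : d i = 0 := by
            have h1 := hdle i
            rw [Finsupp.add_apply, hui0, Finsupp.single_apply,
              if_neg (fun h => (by simpa using hki : k ≠ i) h)] at h1
            omega
          rw [hXmono]
          exact mono_mem_iff.mpr ⟨d, sumSet_filter i s d hd hdi, hdle⟩
        exact Ideal.mem_colon_span_singleton.mp (hcolon hr)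
      · intro hr
        rw [hpA, deleteVar_span_X]
        rw [hdelIpow, mul_comm] at hr
        have hterm := mono_mul_mem_iff.mp hr
        rw [r.as_sum]
        refine Ideal.sum_mem _ fun w hw => ?_
        obtain ⟨d, hd, hdle⟩ := hterm w hw
        have hdle' : d ≤ u + Finsupp.erase i w := by
          intro k
          by_cases hk : k = i
          · subst hk
            rw [hD'i s d hd]
            exact Nat.zero_le _
          · have h1 := hdle k
            rw [Finsupp.add_apply] at h1
            rw [Finsupp.add_apply, Finsupp.erase_ne hk]
            exact h1
        have hw'p : (monomial (Finsupp.erase i w) 1 : MvPolynomial (Fin n) K) ∈ p := by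
          apply (hpu _).mpr
          rw [hIpow]
          have hmm : (monomial (Finsupp.erase i w) 1 : MvPolynomial (Fin n) K) *
              monomial u 1 = monomial (u + Finsupp.erase i w) 1 := by
            simp [monomial_mul, add_comm]
          rw [hmm]
          exact mono_mem_iff.mpr ⟨d, sumSet_subset hD'sub s hd, hdle'⟩
        rw [hpA] at hw'p
        obtain ⟨k, hkA, hk0⟩ : ∃ k ∈ A, Finsupp.erase i w k ≠ 0 := by
          have hmem := mem_ideal_span_X_image.mp hw'p
          have hsup : Finsupp.erase i w ∈
              (monomial (Finsupp.erase i w) (1:K)).support := by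
            rw [mem_support_iff, coeff_monomial, if_pos rfl]
            exact one_ne_zero
          exact hmem _ hsup
        have hki : k ≠ i := fun h => hk0 (by rw [h, Finsupp.erase_same])
        apply mem_ideal_span_X_image.mpr
        intro m hm
        have hmw : m = w := by
          have := support_monomial_subset hm
          simpa using this
        refine ⟨k, ⟨hkA, by simpa using hki⟩, ?_⟩
        rw [hmw]
        rwa [Finsupp.erase_ne hki] at hk0
  -- final contradiction: `∏_{j<s} u_j` divides `X^u`, so `X^u ∈ I^s`
  set c : Fin s → Fin b := Fin.castLE hsb with hc
  have hprodmem : (∏ j : Fin s, ∏ k ∈ U (c j), (X k : MvPolynomial (Fin n) K)) ∈ I ^ s := by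
    have hIs : I ^ s = ∏ _j : Fin s, I := by
      rw [Finset.prod_const, Finset.card_univ, Fintype.card_fin]
    rw [hIs]
    exact Ideal.prod_mem_prod fun j _ => (hUgen (c j)).1
  have hprodeq : (∏ j : Fin s, ∏ k ∈ U (c j), (X k : MvPolynomial (Fin n) K)) =
      monomial (∑ j : Fin s, expOf (U (c j))) 1 := by
    rw [show (∏ j : Fin s, ∏ k ∈ U (c j), (X k : MvPolynomial (Fin n) K)) =
      ∏ j : Fin s, (monomial (expOf (U (c j))) 1 : MvPolynomial (Fin n) K) from
      Finset.prod_congr rfl fun j _ => prod_X_eq _]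
    exact prod_monomial_eq _ _
  have hddu : (∑ j : Fin s, expOf (U (c j))) ≤ u := by
    intro k
    have hdk : (∑ j : Fin s, expOf (U (c j))) k =
        (Finset.univ.filter fun j : Fin s => k ∈ U (c j)).card := by
      rw [Finsupp.finset_sum_apply]
      rw [show (∑ j : Fin s, expOf (U (c j)) k) =
        ∑ j : Fin s, (if k ∈ U (c j) then 1 else 0) from
        Finset.sum_congr rfl fun j _ => expOf_apply _ _]
      simp [Finset.sum_boole]
    rw [hdk]
    rcases (Finset.univ.filter fun j : Fin s => k ∈ U (c j)).eq_empty_or_nonempty with he | hne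
    · rw [he, Finset.card_empty]
      exact Nat.zero_le _
    · obtain ⟨j0, hj0⟩ := hne
      have hk0 : k ∈ U (c j0) := (Finset.mem_filter.mp hj0).2
      have huk : u k ≠ 0 := hui (c j0) k hk0
      have hcard : (Finset.univ.filter fun j : Fin s => k ∈ U (c j)).card ≤ 1 := by
        apply Finset.card_le_one.mpr
        intro a ha a' ha'
        have hka : k ∈ U (c a) := (Finset.mem_filter.mp ha).2
        have hka' : k ∈ U (c a') := (Finset.mem_filter.mp ha').2
        have hcc : c a = c a' := by
          by_contra hne2
          exact (Finset.disjoint_left.mp (hUindep _ _ hne2) hka) hka'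
        exact Fin.castLE_injective _ hcc
      omega
  apply hMu
  have hsplit : (monomial u 1 : MvPolynomial (Fin n) K) =
      monomial (u - ∑ j : Fin s, expOf (U (c j))) 1 *
        monomial (∑ j : Fin s, expOf (U (c j))) 1 := by
    rw [monomial_mul, one_mul, tsub_add_cancel_of_le hddu]
  rw [hsplit, ← hprodeq]
  exact Ideal.mul_mem_left _ _ hprodmem
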